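/- The symmetrized bidisc G_2 is starlike with respect to the origin: if (s,p) ∈ G_2 and t ∈ [0,1], then (ts, tp) ∈ G_2. -/

import Mathlib

open Metric

def symBidisc : Set (ℂ × ℂ) :=
  {p | ∃ a b : ℂ, a ∈ ball (0 : ℂ) 1 ∧ b ∈ ball (0 : ℂ) 1 ∧ p = (a + b, a * b)}

lemma key_root_bound (a b : ℂ) (ha : ‖a‖ < 1) (hb : ‖b‖ < 1)
    (t : ℝ) (ht0 : 0 < t) (ht1 : t ≤ 1) (μ : ℂ)
    (heq : μ ^ 2 - (t : ℂ) * (a + b) * μ + (t : ℂ) * (a * b) = 0) :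
    ‖μ‖ < 1 := by
  by_contra hc
  push_neg at hc
  have hμ0 : μ ≠ 0 := by
    intro h0
    rw [h0] at hc
    norm_num at hc
  set z1 : ℂ := 1 - a / μ with hz1def
  set z2 : ℂ := 1 - b / μ with hz2def
  have habs : ∀ c : ℂ, ‖c‖ < 1 → ‖c / μ‖ < 1 := by
    intro c hcl
    rw [norm_div]
    calc ‖c‖ / ‖μ‖ ≤ ‖c‖ / 1 := by
          apply div_le_div_of_nonneg_left (norm_nonneg c) one_pos hc
      _ < 1 := by simpa using hcl
  have hre1 : 0 < z1.re := by
    have := habs a ha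
    have hre : (a / μ).re ≤ ‖a / μ‖ := Complex.re_le_norm _
    simp only [hz1def, Complex.sub_re, Complex.one_re]
    linarith
  have hre2 : 0 < z2.re := by
    have := habs b hb
    have hre : (b / μ).re ≤ ‖b / μ‖ := Complex.re_le_norm _
    simp only [hz2def, Complex.sub_re, Complex.one_re]
    linarith
  have ht0' : (t : ℂ) ≠ 0 := by exact_mod_cast ht0.ne'
  have hprod : z1 * z2 = (((t - 1) / t : ℝ) : ℂ) := by
    rw [hz1def, hz2def]
    push_cast
    field_simp
    linear_combination heq
  have hz1ne : z1 ≠ 0 := by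
    intro h0; rw [h0] at hre1; simp at hre1
  have hz2eq : z2 = (((t - 1) / t : ℝ) : ℂ) * z1⁻¹ := by
    rw [← hprod, mul_comm z1 z2, mul_assoc, mul_inv_cancel₀ hz1ne, mul_one]
  have hre2' : z2.re ≤ 0 := by
    rw [hz2eq, Complex.re_ofReal_mul, Complex.inv_re]
    have hc1 : (t - 1) / t ≤ 0 := div_nonpos_of_nonpos_of_nonneg (by linarith) ht0.le
    have : 0 ≤ z1.re / Complex.normSq z1 :=
      div_nonneg hre1.le (Complex.normSq_nonneg z1)
    exact mul_nonpos_of_nonpos_of_nonneg hc1 this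
  linarith

/-- The symmetrized bidisc is starlike with respect to the origin. -/
theorem symBidisc_starlike (s p : ℂ) (h : (s, p) ∈ symBidisc)
    (t : ℝ) (ht : t ∈ Set.Icc (0 : ℝ) 1) :
    ((t : ℂ) * s, (t : ℂ) * p) ∈ symBidisc := by
  obtain ⟨a, b, ha, hb, hab⟩ := h
  rw [Prod.mk.injEq] at hab
  obtain ⟨hs, hp⟩ := hab
  subst hs; subst hp
  rw [mem_ball_zero_iff] at ha hb
  obtain ⟨ht0, ht1⟩ := ht
  rcases eq_or_lt_of_le ht0 with h0 | h0
  · refine ⟨0, 0, by simp, by simp, ?_⟩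
    simp [← h0]
  · obtain ⟨d, hd⟩ := IsAlgClosed.exists_pow_nat_eq ((t : ℂ) ^ 2 * (a + b) ^ 2 - 4 * ((t : ℂ) * (a * b))) (n := 2)
      (by norm_num)
    refine ⟨((t : ℂ) * (a + b) + d) / 2, ((t : ℂ) * (a + b) - d) / 2, ?_, ?_, ?_⟩
    · rw [mem_ball_zero_iff]
      apply key_root_bound a b (by simpa using ha) (by simpa using hb) t h0 ht1
      linear_combination hd / 4
    · rw [mem_ball_zero_iff]
      apply key_root_bound a b (by simpa using ha) (by simpa using hb) t h0 ht1
      linear_combination hd / 4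
    · rw [Prod.mk.injEq]
      constructor
      · ring
      · linear_combination hd / 4
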